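/- Let κ be an infinite cardinal and X a set of cardinality |X| ≥ κ. Then the κ-ballean of the free group G = F(X) on X is not so-bounded: there exists a function f : G → ℝ that is slowly oscillating with respect to the κ-ballean but, for every B ⊆ G with |B| < κ, f is unbounded on G∖B. -/

import Mathlib

universe u

/-- The ball `E_F[x] = {x} ∪ Fx` of the `κ`-ballean of a group. -/
def grpBall {G : Type*} [Group G] (F : Set G) (x : G) : Set G :=
  insert x ((fun g => g * x) '' F)

open FreeGroup in
/-- Multiplying by a single letter does not change the last letter of the reduced
word, except for the two elements `1` and `ℓ⁻¹`. -/
theorem letter_lemma {X : Type u} [DecidableEq X] (ℓ : X × Bool) (x : FreeGroup X)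
    (h1 : x ≠ 1) (h2 : x ≠ FreeGroup.mk [(ℓ.1, !ℓ.2)]) :
    (FreeGroup.mk [ℓ] * x).toWord.getLast? = x.toWord.getLast? := by
  have hw : (FreeGroup.mk [ℓ] * x).toWord = reduce (ℓ :: x.toWord) := by
    conv_lhs => rw [show x = FreeGroup.mk x.toWord from (FreeGroup.mk_toWord).symm]
    rw [FreeGroup.mul_mk, FreeGroup.toWord_mk]
    rfl
  rw [hw, reduce.cons, reduce_toWord]
  rcases hlw : x.toWord with _ | ⟨h, t⟩
  · exact absurd (FreeGroup.toWord_eq_nil_iff.mp hlw) h1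
  · simp only []
    by_cases hc : ℓ.1 = h.1 ∧ ℓ.2 = !h.2
    · rw [if_pos hc]
      have hh : h = (ℓ.1, !ℓ.2) := by
        obtain ⟨c1, c2⟩ := hc
        ext
        · exact c1.symm
        · simp [c2]
      rcases t with _ | ⟨a, t'⟩
      · exfalso
        apply h2
        rw [← hh, ← hlw, FreeGroup.mk_toWord]
      · exact (List.getLast?_cons_cons ..).symm
    · rw [if_neg hc]
      exact List.getLast?_cons_cons ..

open FreeGroup in
theorem bad_finite {X : Type u} [DecidableEq X] (g : FreeGroup X) :
    Set.Finite {x : FreeGroup X | (g * x).toWord.getLast? ≠ x.toWord.getLast?} := by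
  induction g using FreeGroup.induction_on with
  | C1 =>
    simp only [one_mul]
    convert Set.finite_empty
    ext x; simp
  | of t =>
    apply Set.Finite.subset ((Set.finite_singleton
      (FreeGroup.mk [((t, true).1, !(t, true).2)])).insert 1)
    intro x hx
    by_contra hmem
    simp only [Set.mem_insert_iff, Set.mem_singleton_iff, not_or] at hmem
    exact hx (letter_lemma (t, true) x hmem.1 hmem.2)
  | inv_of t _ =>
    apply Set.Finite.subset ((Set.finite_singleton
      (FreeGroup.mk [((t, false).1, !(t, false).2)])).insert 1)
    intro x hx
    by_contra hmem
    simp only [Set.mem_insert_iff, Set.mem_singleton_iff, not_or] at hmem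
    have hinv : (FreeGroup.of t : FreeGroup X)⁻¹ = FreeGroup.mk [(t, false)] := by
      show (FreeGroup.mk [(t, true)])⁻¹ = _
      rw [FreeGroup.inv_mk]
      rfl
    rw [Set.mem_setOf_eq, hinv] at hx
    exact hx (letter_lemma (t, false) x hmem.1 hmem.2)
  | mul g₁ g₂ ih₁ ih₂ =>
    apply Set.Finite.subset (Set.Finite.union ih₂ (ih₁.image (fun y => g₂⁻¹ * y)))
    intro x hx
    rw [Set.mem_setOf_eq, mul_assoc] at hx
    by_cases h2 : (g₂ * x).toWord.getLast? = x.toWord.getLast?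
    · right
      exact ⟨g₂ * x, by rw [Set.mem_setOf_eq, h2]; exact hx, inv_mul_cancel_left g₂ x⟩
    · exact Or.inl h2

/-- For an infinite cardinal `κ` and a set `X` of cardinality `≥ κ`, the
`κ`-ballean of the free group `F(X)` is not so-bounded: there is a slowly
oscillating `f : F(X) → ℝ` which is unbounded on the complement of every
set of cardinality `< κ`. -/
theorem kappa_ballean_freeGroup_not_soBounded {X : Type u} (κ : Cardinal.{u})
    (hκ : Cardinal.aleph0 ≤ κ) (hX : κ ≤ Cardinal.mk X) :
    ∃ f : FreeGroup X → ℝ,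
      (∀ F : Set (FreeGroup X), Cardinal.mk F < κ → ∀ ε : ℝ, 0 < ε →
        ∃ B : Set (FreeGroup X), Cardinal.mk B < κ ∧
          ∀ x ∉ B, ∀ a ∈ grpBall F x, ∀ b ∈ grpBall F x, |f a - f b| < ε) ∧
      (∀ B : Set (FreeGroup X), Cardinal.mk B < κ →
        ∀ C : ℝ, ∃ x : FreeGroup X, x ∉ B ∧ C < |f x|) := by
  classical
  have h1 : Cardinal.mk (ULift.{u} ℕ × Quotient.out κ) = κ := by
    simp [Cardinal.mk_prod, Cardinal.mk_out, Cardinal.aleph0_mul_eq hκ]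
  obtain ⟨e⟩ := (Cardinal.le_def _ _).mp
    (show Cardinal.mk (ULift.{u} ℕ × Quotient.out κ) ≤ Cardinal.mk X by rw [h1]; exact hX)
  set φ : X → ℝ := Function.extend e (fun p => ((p.1.down : ℕ) : ℝ)) (fun _ => 0) with hφ
  set f : FreeGroup X → ℝ := fun w => (w.toWord.getLast?.elim 0 (fun p => φ p.1)) with hf
  refine ⟨f, ?_, ?_⟩
  · intro F hF ε hε
    set Bad : FreeGroup X → Set (FreeGroup X) :=
      fun g => {x | (g * x).toWord.getLast? ≠ x.toWord.getLast?} with hBad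
    refine ⟨insert 1 (⋃ g : F, Bad g), ?_, ?_⟩
    · rcases eq_or_lt_of_le hκ with hEq | hLt
      · have hFfin : F.Finite := Cardinal.lt_aleph0_iff_set_finite.mp (hEq ▸ hF)
        have hfin : (insert (1 : FreeGroup X) (⋃ g : F, Bad g)).Finite := by
          apply Set.Finite.insert
          haveI := hFfin.to_subtype
          exact Set.finite_iUnion (fun g => bad_finite (g : FreeGroup X))
        exact hEq ▸ hfin.lt_aleph0
      · refine lt_of_le_of_lt Cardinal.mk_insert_le ?_
        refine Cardinal.add_lt_of_lt hκ ?_ (lt_of_lt_of_le Cardinal.one_lt_aleph0 hκ)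
        refine lt_of_le_of_lt (Cardinal.mk_iUnion_le _) ?_
        refine Cardinal.mul_lt_of_lt hκ hF (lt_of_le_of_lt ?_ hLt)
        exact ciSup_le' fun g => le_of_lt (bad_finite (g : FreeGroup X)).lt_aleph0
    · intro x hx a ha b hb
      have hxU : ∀ g : F, x ∉ Bad (g : FreeGroup X) := by
        intro g hg
        exact hx (Set.mem_insert_of_mem _ (Set.mem_iUnion.mpr ⟨g, hg⟩))
      have key : ∀ c ∈ grpBall F x, f c = f x := by
        intro c hc
        simp only [grpBall, Set.mem_insert_iff, Set.mem_image] at hc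
        rcases hc with rfl | ⟨g, hg, rfl⟩
        · rfl
        · have hgood : ((g * x).toWord.getLast? = x.toWord.getLast?) := by
            by_contra hcon
            exact hxU ⟨g, hg⟩ hcon
          simp only [hf, hgood]
      rw [key a ha, key b hb]
      simpa using hε
  · intro B hB C
    obtain ⟨n, hn⟩ := exists_nat_gt C
    have hinj : Function.Injective
        (fun t : Quotient.out κ => FreeGroup.of (e (⟨n⟩, t))) := by
      intro a b hab
      have h2 := e.injective (FreeGroup.of_injective hab)
      exact (Prod.ext_iff.mp h2).2
    have hnot : ¬ Set.range (fun t : Quotient.out κ => FreeGroup.of (e (⟨n⟩, t))) ⊆ B := by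
      intro hsub
      have h3 := Cardinal.mk_le_mk_of_subset hsub
      rw [Cardinal.mk_range_eq _ hinj, Cardinal.mk_out] at h3
      exact absurd (lt_of_le_of_lt h3 hB) (lt_irrefl κ)
    obtain ⟨y, ⟨t, rfl⟩, hyB⟩ := Set.not_subset.mp hnot
    refine ⟨_, hyB, ?_⟩
    have hf1 : f (FreeGroup.of (e (⟨n⟩, t))) = n := by
      simp only [hf, FreeGroup.toWord_of, List.getLast?_singleton, Option.elim, hφ]
      exact e.injective.extend_apply _ _ _
    rw [hf1, abs_of_nonneg (by positivity)]
    exact hn
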